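/- For any missingness pattern r' and discrete (X, Y, R) with positivity, the exponential tilting (Tukey's) representation holds: f(y | x, R = r') = OR(y, r' | x) f(y | x, R = 1) / E{OR(Y, r' | x) | x, R = 1}, where OR(y, r | x) = [p(r | x, y) p(R=1 | x, y_0)] / [p(r | x, y_0) p(R=1 | x, y)]. -/

import Mathlib

open Finset
open scoped Classical

noncomputable def pr {Ω : Type*} [Fintype Ω] (μ : Ω → ℝ) (A : Ω → Prop) : ℝ :=
  ∑ ω, if A ω then μ ω else 0

noncomputable def cpr {Ω : Type*} [Fintype Ω] (μ : Ω → ℝ) (A B : Ω → Prop) : ℝ :=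
  pr μ (fun ω => A ω ∧ B ω) / pr μ B

lemma pr_congr {Ω : Type*} [Fintype Ω] (μ : Ω → ℝ) {A B : Ω → Prop}
    (h : ∀ ω, A ω ↔ B ω) : pr μ A = pr μ B := by
  unfold pr
  exact Finset.sum_congr rfl fun ω _ => by simp [h ω]

lemma pr_partition {Ω 𝒴 : Type*} [Fintype Ω] [Fintype 𝒴] {p : ℕ}
    (μ : Ω → ℝ) (Y : Ω → Fin p → 𝒴) (Q : Ω → Prop) :
    pr μ Q = ∑ y' : Fin p → 𝒴, pr μ (fun ω => (∀ j, Y ω j = y' j) ∧ Q ω) := by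
  unfold pr
  rw [Finset.sum_comm]
  refine Finset.sum_congr rfl fun ω _ => ?_
  symm
  rw [Finset.sum_eq_single (Y ω)]
  · simp
  · intro b _ hb
    have hh : ¬(∀ j, Y ω j = b j) := fun hh => hb (funext fun j => (hh j).symm)
    simp [hh]
  · intro hmem
    exact absurd (Finset.mem_univ _) hmem

section

variable {Ω 𝒳 𝒴 : Type*} [Fintype Ω] [Fintype 𝒴] {p : ℕ}

/-- The propensity `p(R = r | X = x, Y = y)` of missingness pattern `r`. -/
noncomputable def patProp (μ : Ω → ℝ) (X : Ω → 𝒳) (Y : Ω → Fin p → 𝒴)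
    (R : Ω → Fin p → Bool) (r : Fin p → Bool) (x : 𝒳) (y : Fin p → 𝒴) : ℝ :=
  cpr μ (fun ω => ∀ j, R ω j = r j) (fun ω => X ω = x ∧ ∀ j, Y ω j = y j)

/-- The odds ratio function `OR(y, r | x)` with reference value `y₀`. -/
noncomputable def orFn (μ : Ω → ℝ) (X : Ω → 𝒳) (Y : Ω → Fin p → 𝒴)
    (R : Ω → Fin p → Bool) (y₀ : Fin p → 𝒴) (y : Fin p → 𝒴) (r : Fin p → Bool)
    (x : 𝒳) : ℝ :=
  (patProp μ X Y R r x y * patProp μ X Y R (fun _ => true) x y₀) /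
    (patProp μ X Y R r x y₀ * patProp μ X Y R (fun _ => true) x y)

/-- The baseline outcome density `f(y | x, R = 1)` of the complete cases. -/
noncomputable def baseOut (μ : Ω → ℝ) (X : Ω → 𝒳) (Y : Ω → Fin p → 𝒴)
    (R : Ω → Fin p → Bool) (y : Fin p → 𝒴) (x : 𝒳) : ℝ :=
  cpr μ (fun ω => ∀ j, Y ω j = y j) (fun ω => X ω = x ∧ ∀ j, R ω j = true)

/-- the exponential tilting (Tukey) representation: for any pattern `r'`,
`f(y | x, R = r') = OR(y, r' | x) f(y | x, R = 1) / E{OR(Y, r' | x) | x, R = 1}`. -/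
theorem stmt10 (μ : Ω → ℝ) (hμ0 : ∀ ω, 0 ≤ μ ω) (hμ1 : ∑ ω, μ ω = 1)
    (X : Ω → 𝒳) (Y : Ω → Fin p → 𝒴) (R : Ω → Fin p → Bool)
    (x : 𝒳) (y₀ : Fin p → 𝒴)
    (hsupp : ∀ y' : Fin p → 𝒴, pr μ (fun ω => X ω = x ∧ ∀ j, Y ω j = y' j) > 0)
    (hpos : ∀ (r' : Fin p → Bool) (y' : Fin p → 𝒴), patProp μ X Y R r' x y' > 0)
    (r' : Fin p → Bool) (y : Fin p → 𝒴) :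
    cpr μ (fun ω => ∀ j, Y ω j = y j) (fun ω => X ω = x ∧ ∀ j, R ω j = r' j)
      = orFn μ X Y R y₀ y r' x * baseOut μ X Y R y x /
        ∑ y' : Fin p → 𝒴, orFn μ X Y R y₀ y' r' x * baseOut μ X Y R y' x := by
  classical
  set J : (Fin p → Bool) → (Fin p → 𝒴) → ℝ := fun r yy =>
    pr μ (fun ω => (∀ j, Y ω j = yy j) ∧ X ω = x ∧ ∀ j, R ω j = r j) with hJdef
  set a : (Fin p → 𝒴) → ℝ := fun yy =>
    pr μ (fun ω => X ω = x ∧ ∀ j, Y ω j = yy j) with hadef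
  set S₁ : ℝ := pr μ (fun ω => X ω = x ∧ ∀ j, R ω j = true) with hS₁def
  have hane : ∀ yy, a yy ≠ 0 := fun yy => ne_of_gt (hsupp yy)
  have hpat : ∀ (r : Fin p → Bool) (yy : Fin p → 𝒴),
      patProp μ X Y R r x yy = J r yy / a yy := by
    intro r yy
    unfold patProp cpr
    congr 1
    exact pr_congr μ fun ω => by tauto
  have hJ : ∀ (r : Fin p → Bool) (yy : Fin p → 𝒴),
      J r yy = patProp μ X Y R r x yy * a yy := by
    intro r yy
    rw [hpat]
    exact (div_mul_cancel₀ _ (hane yy)).symm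
  have hJpos : ∀ (r : Fin p → Bool) (yy : Fin p → 𝒴), 0 < J r yy := by
    intro r yy
    rw [hJ]
    exact mul_pos (hpos r yy) (hsupp yy)
  have hpart : ∀ r : Fin p → Bool,
      pr μ (fun ω => X ω = x ∧ ∀ j, R ω j = r j) = ∑ yy : Fin p → 𝒴, J r yy :=
    fun r => pr_partition μ Y _
  have hS₁ : S₁ = ∑ yy : Fin p → 𝒴, J (fun _ => true) yy := hpart _
  have : Nonempty (Fin p → 𝒴) := ⟨y⟩
  have hS₁pos : 0 < S₁ := by
    rw [hS₁]
    exact Finset.sum_pos (fun yy _ => hJpos _ yy) Finset.univ_nonempty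
  have hbase : ∀ yy : Fin p → 𝒴,
      baseOut μ X Y R yy x = J (fun _ => true) yy / S₁ := by
    intro yy
    unfold baseOut cpr
    rw [hJdef, hS₁def]
  set C : ℝ := J (fun _ => true) y₀ / (J r' y₀ * S₁) with hCdef
  have hCpos : 0 < C := div_pos (hJpos _ _) (mul_pos (hJpos _ _) hS₁pos)
  have hterm : ∀ yy : Fin p → 𝒴,
      orFn μ X Y R y₀ yy r' x * baseOut μ X Y R yy x = J r' yy * C := by
    intro yy
    rw [orFn, hbase, hpat, hpat, hpat, hpat, hCdef]
    have h1 : J (fun _ => true) yy ≠ 0 := ne_of_gt (hJpos _ _)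
    have h2 : J r' y₀ ≠ 0 := ne_of_gt (hJpos _ _)
    have h3 : S₁ ≠ 0 := ne_of_gt hS₁pos
    field_simp [hane yy, hane y₀]
  have hlhs : cpr μ (fun ω => ∀ j, Y ω j = y j)
      (fun ω => X ω = x ∧ ∀ j, R ω j = r' j) = J r' y / ∑ yy : Fin p → 𝒴, J r' yy := by
    unfold cpr
    rw [hpart r']
  rw [hlhs, hterm y, Finset.sum_congr rfl fun yy _ => hterm yy, ← Finset.sum_mul,
    mul_div_mul_right _ _ (ne_of_gt hCpos)]

end
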